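/- Every (3k+1)-multiple G of the graph G_1 = ({1,3},{1,5},{2,3},{2,4}) is a k-blow-up of G_1: for every edge coloring of G using each color at most k times, there is an ordered copy of G_1 in G with four distinct colors on its edges. -/

import Mathlib

/-- The set of vertices of a hypergraph given as a list of finite edges. -/
def vset (H : List (Finset ℕ)) : Finset ℕ := H.foldr (· ∪ ·) ∅

/-- The number of vertices `v(H)`. -/
def nv (H : List (Finset ℕ)) : ℕ := (vset H).card

/-- The weight `i(H)`, the number of vertex-edge incidences. -/
def iw (H : List (Finset ℕ)) : ℕ := (H.map Finset.card).sum

/-- A hypergraph is simple if its edges are distinct (and nonempty). -/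
def HSimple (H : List (Finset ℕ)) : Prop := H.Nodup ∧ ∀ E ∈ H, E.Nonempty

/-- Ordered hypergraph containment: an increasing vertex injection together with an
injective assignment of edges such that each edge of `F` maps vertex-wise into its image. -/
def HContains (H F : List (Finset ℕ)) : Prop :=
  ∃ (φ : ℕ → ℕ) (f : Fin F.length → Fin H.length),
    StrictMono φ ∧ Function.Injective f ∧
      ∀ i : Fin F.length, ∀ v ∈ F.get i, φ v ∈ H.get (f i)

/-- `ex_e(F,n)`: max number of edges of a simple `F`-free hypergraph on at most `n` vertices. -/
noncomputable def exE (F : List (Finset ℕ)) (n : ℕ) : ℕ :=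
  sSup {m | ∃ H, HSimple H ∧ ¬ HContains H F ∧ nv H ≤ n ∧ H.length = m}

/-- `ex_i(F,n)`: max weight of a simple `F`-free hypergraph on at most `n` vertices. -/
noncomputable def exI (F : List (Finset ℕ)) (n : ℕ) : ℕ :=
  sSup {m | ∃ H, HSimple H ∧ ¬ HContains H F ∧ nv H ≤ n ∧ iw H = m}

/-- A hypergraph is a graph if all edges have two vertices. -/
def IsGraphH (H : List (Finset ℕ)) : Prop := ∀ E ∈ H, E.card = 2

/-- `gex(B,n)` for a family `B` of ordered graphs. -/
noncomputable def gexSet (B : Set (List (Finset ℕ))) (n : ℕ) : ℕ :=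
  sSup {m | ∃ G, HSimple G ∧ IsGraphH G ∧ (∀ F ∈ B, ¬ HContains G F) ∧ nv G ≤ n ∧ G.length = m}

/-- `gex(F,n)` for a single ordered graph. -/
noncomputable def gex (F : List (Finset ℕ)) (n : ℕ) : ℕ := gexSet {F} n

/-- `G'` is a `k`-blow-up of `G`: every edge colouring of `G'` using each colour at most `k`
times admits an ordered copy of `G` with pairwise distinct colours. -/
def IsBlowup (k : ℕ) (G' G : List (Finset ℕ)) : Prop :=
  ∀ χ : Fin G'.length → ℕ,
    (∀ c : ℕ, (Finset.univ.filter fun i => χ i = c).card ≤ k) →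
    ∃ (φ : ℕ → ℕ) (f : Fin G.length → Fin G'.length),
      StrictMono φ ∧ Function.Injective f ∧
      (∀ i : Fin G.length, ∀ v ∈ G.get i, φ v ∈ G'.get (f i)) ∧
      Function.Injective (χ ∘ f)

/-- The hierarchy `F_1(n) = 2n`, `F_{i+1}(n) = F_i iterated n times starting at 1`
(indexed from 0, so `Fiter i = F_{i+1}`). -/
def Fiter : ℕ → ℕ → ℕ
  | 0, n => 2 * n
  | i+1, n => (Fiter i)^[n] 1

/-- The Ackermann function `A(n) = F_n(n)`. -/
def Ack (n : ℕ) : ℕ := Fiter (n - 1) n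

/-- The inverse Ackermann function `α(n) = min {m : A(m) ≥ n}`. -/
noncomputable def invAck (n : ℕ) : ℕ := sInf {m | n ≤ Ack m}

/-- The almost constant factor `β(k,l,n)` from the generalized Davenport–Schinzel bound. -/
noncomputable def DSbeta (k l n : ℕ) : ℕ :=
  k * 2 ^ (k * l - 3) * (10 * k) ^ (2 * (invAck n) ^ (k * l - 4) + 8 * (invAck n) ^ (k * l - 5))

/-- The ordered graph `G_1 = ({1,3},{1,5},{2,3},{2,4})`. -/
def G1 : List (Finset ℕ) := [{1,3}, {1,5}, {2,3}, {2,4}]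

/-- A `k`-multiple of `G_1`. -/
def IsMultiple (k : ℕ) (G : List (Finset ℕ)) : Prop :=
  HSimple G ∧ IsGraphH G ∧
  ∃ (A B C : Finset ℕ) (v : ℕ),
    A.card = k ∧ (∀ a ∈ A, a < v) ∧ (∀ b ∈ B, v < b) ∧
    (∀ b ∈ B, ∀ c ∈ C, b < c) ∧
    vset G = A ∪ {v} ∪ B ∪ C ∧
    (∀ a ∈ A, ({a, v} : Finset ℕ) ∈ G) ∧
    (∀ a ∈ A, (B.filter fun b => ({a, b} : Finset ℕ) ∈ G).card = k) ∧
    (∀ a ∈ A, (C.filter fun c => ({a, c} : Finset ℕ) ∈ G).card = k) ∧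
    (∀ E ∈ G, (∃ a ∈ A, E = {a, v}) ∨ (∃ a ∈ A, ∃ w ∈ B ∪ C, E = {a, w}))

noncomputable def eidx (G : List (Finset ℕ)) (hG : 0 < G.length) (E : Finset ℕ) : Fin G.length :=
  if h : ∃ i : Fin G.length, G.get i = E then h.choose else ⟨0, hG⟩

lemma eidx_spec {G : List (Finset ℕ)} (hG : 0 < G.length) {E : Finset ℕ} (hE : E ∈ G) :
    G.get (eidx G hG E) = E := by
  have h : ∃ i : Fin G.length, G.get i = E := List.mem_iff_get.mp hE
  rw [eidx, dif_pos h]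
  exact h.choose_spec

lemma count_aux {G : List (Finset ℕ)} (hG : 0 < G.length) (χ : Fin G.length → ℕ) (k : ℕ)
    (hχ : ∀ c : ℕ, (Finset.univ.filter fun i => χ i = c).card ≤ k)
    (S : Finset ℕ) (e : ℕ → Finset ℕ) (he : ∀ a ∈ S, e a ∈ G)
    (hinj : ∀ a ∈ S, ∀ b ∈ S, e a = e b → a = b) (c : ℕ) :
    (S.filter fun a => χ (eidx G hG (e a)) = c).card ≤ k := by
  refine le_trans (Finset.card_le_card_of_injOn (fun a => eidx G hG (e a)) ?_ ?_) (hχ c)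
  · intro a ha
    simp only [Finset.mem_filter] at ha ⊢
    exact Finset.mem_filter.mpr ⟨Finset.mem_univ _, by simp_all⟩
  · intro a ha b hb h
    simp only [Finset.coe_filter, Set.mem_setOf_eq] at ha hb
    have h' : eidx G hG (e a) = eidx G hG (e b) := h
    exact hinj a ha.1 b hb.1
      (by rw [← eidx_spec hG (he a ha.1), h', eidx_spec hG (he b hb.1)])

lemma exists_avoid {G : List (Finset ℕ)} (hG : 0 < G.length) (χ : Fin G.length → ℕ) (k : ℕ)
    (hχ : ∀ c : ℕ, (Finset.univ.filter fun i => χ i = c).card ≤ k)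
    (S : Finset ℕ) (e : ℕ → Finset ℕ) (he : ∀ a ∈ S, e a ∈ G)
    (hinj : ∀ a ∈ S, ∀ b ∈ S, e a = e b → a = b) (cs : Finset ℕ) (hcs : cs.card ≤ 3)
    (hS : 3 * k + 1 ≤ S.card) :
    ∃ a ∈ S, χ (eidx G hG (e a)) ∉ cs := by
  by_contra h
  push_neg at h
  have hsub : S ⊆ cs.biUnion fun c => S.filter fun a => χ (eidx G hG (e a)) = c := by
    intro a ha
    rw [Finset.mem_biUnion]
    exact ⟨_, h a ha, Finset.mem_filter.mpr ⟨ha, rfl⟩⟩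
  have h2 : S.card ≤ cs.card * k := by
    refine le_trans (Finset.card_le_card hsub) (le_trans Finset.card_biUnion_le ?_)
    refine le_trans (Finset.sum_le_sum fun c _ => count_aux hG χ k hχ S e he hinj c) ?_
    simp [Finset.sum_const, smul_eq_mul]
  have h3 : cs.card * k ≤ 3 * k := Nat.mul_le_mul_right k hcs
  omega

def mkphi (x0 x1 x2 x3 x4 x5 : ℕ) : ℕ → ℕ
  | 0 => x0
  | 1 => x1
  | 2 => x2
  | 3 => x3
  | 4 => x4
  | n + 5 => x5 + n

lemma mkphi_mono {x0 x1 x2 x3 x4 x5 : ℕ} (h0 : x0 < x1) (h1 : x1 < x2) (h2 : x2 < x3)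
    (h3 : x3 < x4) (h4 : x4 < x5) : StrictMono (mkphi x0 x1 x2 x3 x4 x5) := by
  apply strictMono_nat_of_lt_succ
  intro n
  match n with
  | 0 => exact h0
  | 1 => exact h1
  | 2 => exact h2
  | 3 => exact h3
  | 4 => simpa [mkphi] using h4
  | n + 5 => simp only [mkphi]; omega

/-- Every `(3k+1)`-multiple of `G_1` is a `k`-blow-up of `G_1`. -/
theorem stmt9 (k : ℕ) (hk : 1 ≤ k) (G : List (Finset ℕ))
    (hG : IsMultiple (3 * k + 1) G) : IsBlowup k G G1 := by
  classical
  obtain ⟨⟨hnd, hne⟩, hgr, A, B, C, v, hA, hAv, hvB, hBC, hvset, hstar, hBdeg, hCdeg, hedges⟩ := hG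
  intro χ hχ
  have hAne : A.Nonempty := Finset.card_pos.mp (by omega)
  obtain ⟨a0, ha0⟩ := hAne
  have hGlen : 0 < G.length := List.length_pos_iff.mpr (List.ne_nil_of_mem (hstar a0 ha0))
  set A' := A.erase (A.min' ⟨a0, ha0⟩) with hA'
  have hA'sub : A' ⊆ A := Finset.erase_subset _ _
  have hA'card : A'.card = 3 * k := by
    have h := Finset.card_erase_of_mem (s := A) (A.min'_mem ⟨a0, ha0⟩)
    rw [hA] at h
    exact h.trans (by omega)
  have hA'pos : ∀ a ∈ A', 1 ≤ a := by
    intro a ha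
    have h1 : a ≠ A.min' ⟨a0, ha0⟩ := (Finset.mem_erase.mp ha).1
    have h2 : A.min' ⟨a0, ha0⟩ ≤ a := A.min'_le a (hA'sub ha)
    omega
  have hstarinj : ∀ a ∈ A', ∀ a' ∈ A', ({a, v} : Finset ℕ) = {a', v} → a = a' := by
    intro a ha a' ha' h
    have hav := hAv a (hA'sub ha)
    have hm : a ∈ ({a', v} : Finset ℕ) := h ▸ (by simp)
    simp only [Finset.mem_insert, Finset.mem_singleton] at hm
    rcases hm with h1 | h1
    · exact h1
    · omega
  have hstarG : ∀ a ∈ A', ({a, v} : Finset ℕ) ∈ G := fun a ha => hstar a (hA'sub ha)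
  have hex : ∃ a ∈ A', ∃ a' ∈ A',
      χ (eidx G hGlen {a, v}) ≠ χ (eidx G hGlen {a', v}) := by
    by_contra h
    push_neg at h
    obtain ⟨a1, ha1⟩ : A'.Nonempty := Finset.card_pos.mp (by omega)
    have hsub : A' ⊆ A'.filter fun a => χ (eidx G hGlen {a, v}) = χ (eidx G hGlen {a1, v}) :=
      fun a ha => Finset.mem_filter.mpr ⟨ha, h a ha a1 ha1⟩
    have h1 := count_aux hGlen χ k hχ A' (fun a => {a, v}) hstarG hstarinj
      (χ (eidx G hGlen {a1, v}))
    have h2 : A'.card ≤ k := le_trans (Finset.card_le_card hsub) h1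
    omega
  obtain ⟨x, hx, y, hy, hxy⟩ := hex
  have hxny : x ≠ y := fun h => hxy (by rw [h])
  obtain ⟨a1, ha1, a2, ha2, h12, hc12⟩ :
      ∃ a1 ∈ A', ∃ a2 ∈ A', a1 < a2 ∧
        χ (eidx G hGlen {a1, v}) ≠ χ (eidx G hGlen {a2, v}) := by
    rcases lt_or_gt_of_ne hxny with h | h
    · exact ⟨x, hx, y, hy, h, hxy⟩
    · exact ⟨y, hy, x, hx, h, hxy.symm⟩
  have ha1A := hA'sub ha1
  have ha2A := hA'sub ha2
  have ha1v := hAv a1 ha1A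
  have ha2v := hAv a2 ha2A
  -- choose b ∈ B
  have hNbcard : (B.filter fun b => ({a2, b} : Finset ℕ) ∈ G).card = 3 * k + 1 := hBdeg a2 ha2A
  have hNbB : ∀ b ∈ B.filter fun b => ({a2, b} : Finset ℕ) ∈ G, v < b :=
    fun b hb => hvB b (Finset.mem_filter.mp hb).1
  have hNbG : ∀ b ∈ B.filter (fun b => ({a2, b} : Finset ℕ) ∈ G), ({a2, b} : Finset ℕ) ∈ G :=
    fun b hb => (Finset.mem_filter.mp hb).2
  have hNbinj : ∀ b ∈ B.filter (fun b => ({a2, b} : Finset ℕ) ∈ G),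
      ∀ b' ∈ B.filter (fun b => ({a2, b} : Finset ℕ) ∈ G),
      ({a2, b} : Finset ℕ) = {a2, b'} → b = b' := by
    intro b hb b' hb' h
    have h1 := hNbB b hb
    have h2 := hNbB b' hb'
    have hm : b ∈ ({a2, b'} : Finset ℕ) := h ▸ (by simp)
    simp only [Finset.mem_insert, Finset.mem_singleton] at hm
    rcases hm with h3 | h3
    · omega
    · exact h3
  obtain ⟨b, hb, hbc⟩ := exists_avoid hGlen χ k hχ _ (fun b => {a2, b}) hNbG hNbinj
    {χ (eidx G hGlen {a1, v}), χ (eidx G hGlen {a2, v})}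
    (le_trans (Finset.card_insert_le _ _) (by simp)) (by omega)
  simp only [Finset.mem_insert, Finset.mem_singleton, not_or] at hbc
  obtain ⟨hc13, hc23⟩ := hbc
  have hvb : v < b := hNbB b hb
  have hbG : ({a2, b} : Finset ℕ) ∈ G := hNbG b hb
  have hbB : b ∈ B := (Finset.mem_filter.mp hb).1
  -- choose c ∈ C
  have hNccard : (C.filter fun c => ({a1, c} : Finset ℕ) ∈ G).card = 3 * k + 1 := hCdeg a1 ha1A
  have hNcgt : ∀ x ∈ C.filter fun c => ({a1, c} : Finset ℕ) ∈ G, b < x :=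
    fun x hx => hBC b hbB x (Finset.mem_filter.mp hx).1
  have hNcG : ∀ x ∈ C.filter (fun c => ({a1, c} : Finset ℕ) ∈ G), ({a1, x} : Finset ℕ) ∈ G :=
    fun x hx => (Finset.mem_filter.mp hx).2
  have hNcinj : ∀ x ∈ C.filter (fun c => ({a1, c} : Finset ℕ) ∈ G),
      ∀ x' ∈ C.filter (fun c => ({a1, c} : Finset ℕ) ∈ G),
      ({a1, x} : Finset ℕ) = {a1, x'} → x = x' := by
    intro x hx x' hx' h
    have h1 := hNcgt x hx
    have h2 := hNcgt x' hx'
    have hm : x ∈ ({a1, x'} : Finset ℕ) := h ▸ (by simp)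
    simp only [Finset.mem_insert, Finset.mem_singleton] at hm
    rcases hm with h3 | h3
    · omega
    · exact h3
  obtain ⟨cc, hcc, hccc⟩ := exists_avoid hGlen χ k hχ _ (fun x => {a1, x}) hNcG hNcinj
    {χ (eidx G hGlen {a1, v}), χ (eidx G hGlen {a2, v}), χ (eidx G hGlen {a2, b})}
    (le_trans (Finset.card_insert_le _ _)
      (by have := Finset.card_insert_le (χ (eidx G hGlen {a2, v})) {χ (eidx G hGlen {a2, b})}; rw [Finset.card_singleton] at this; omega)) (by omega)
  simp only [Finset.mem_insert, Finset.mem_singleton, not_or] at hccc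
  obtain ⟨hc14, hc24, hc34⟩ := hccc
  have hbcc : b < cc := hNcgt cc hcc
  have hccG : ({a1, cc} : Finset ℕ) ∈ G := hNcG cc hcc
  have h1a1 : 1 ≤ a1 := hA'pos a1 ha1
  -- name the four edge indices
  set i0 : Fin G.length := eidx G hGlen {a1, v} with hi0
  set i1 : Fin G.length := eidx G hGlen {a1, cc} with hi1
  set i2 : Fin G.length := eidx G hGlen {a2, v} with hi2
  set i3 : Fin G.length := eidx G hGlen {a2, b} with hi3
  have hg0 : G.get i0 = {a1, v} := eidx_spec hGlen (hstar a1 ha1A)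
  have hg1 : G.get i1 = {a1, cc} := eidx_spec hGlen hccG
  have hg2 : G.get i2 = {a2, v} := eidx_spec hGlen (hstar a2 ha2A)
  have hg3 : G.get i3 = {a2, b} := eidx_spec hGlen hbG
  clear_value i0 i1 i2 i3
  -- build the copy
  refine ⟨mkphi (a1 - 1) a1 a2 v b cc,
    ![i0, i1, i2, i3],
    mkphi_mono (by omega) h12 ha2v hvb hbcc, ?_, ?_, ?_⟩
  case refine_3 =>
    have hv0 : (χ ∘ (![i0, i1, i2, i3] : Fin G1.length → Fin G.length)) ⟨0, by decide⟩ = χ i0 := rfl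
    have hv1 : (χ ∘ (![i0, i1, i2, i3] : Fin G1.length → Fin G.length)) ⟨1, by decide⟩ = χ i1 := rfl
    have hv2 : (χ ∘ (![i0, i1, i2, i3] : Fin G1.length → Fin G.length)) ⟨2, by decide⟩ = χ i2 := rfl
    have hv3 : (χ ∘ (![i0, i1, i2, i3] : Fin G1.length → Fin G.length)) ⟨3, by decide⟩ = χ i3 := rfl
    intro i j hij
    have hi : i = ⟨0, by decide⟩ ∨ i = ⟨1, by decide⟩ ∨ i = ⟨2, by decide⟩ ∨ i = ⟨3, by decide⟩ := by
      have h4 : i.val = 0 ∨ i.val = 1 ∨ i.val = 2 ∨ i.val = 3 := by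
        have h5 : i.val < 4 := i.isLt; omega
      rcases h4 with h | h | h | h
      exacts [Or.inl (Fin.ext h), Or.inr (Or.inl (Fin.ext h)),
        Or.inr (Or.inr (Or.inl (Fin.ext h))), Or.inr (Or.inr (Or.inr (Fin.ext h)))]
    have hj : j = ⟨0, by decide⟩ ∨ j = ⟨1, by decide⟩ ∨ j = ⟨2, by decide⟩ ∨ j = ⟨3, by decide⟩ := by
      have h4 : j.val = 0 ∨ j.val = 1 ∨ j.val = 2 ∨ j.val = 3 := by
        have h5 : j.val < 4 := j.isLt; omega
      rcases h4 with h | h | h | h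
      exacts [Or.inl (Fin.ext h), Or.inr (Or.inl (Fin.ext h)),
        Or.inr (Or.inr (Or.inl (Fin.ext h))), Or.inr (Or.inr (Or.inr (Fin.ext h)))]
    rcases hi with rfl | rfl | rfl | rfl <;> rcases hj with rfl | rfl | rfl | rfl <;>
      first
        | rfl
        | exact absurd hij hc12
        | exact absurd hij hc12.symm
        | exact absurd hij hc13
        | exact absurd hij (Ne.symm hc13)
        | exact absurd hij hc23
        | exact absurd hij (Ne.symm hc23)
        | exact absurd hij hc14
        | exact absurd hij (Ne.symm hc14)
        | exact absurd hij hc24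
        | exact absurd hij (Ne.symm hc24)
        | exact absurd hij hc34
        | exact absurd hij (Ne.symm hc34)
  case refine_1 =>
    exact Function.Injective.of_comp (f := χ) (by
      have hv0 : (χ ∘ (![i0, i1, i2, i3] : Fin G1.length → Fin G.length)) ⟨0, by decide⟩ = χ i0 := rfl
      intro i j hij
      have hi : i = ⟨0, by decide⟩ ∨ i = ⟨1, by decide⟩ ∨ i = ⟨2, by decide⟩ ∨ i = ⟨3, by decide⟩ := by
        have h4 : i.val = 0 ∨ i.val = 1 ∨ i.val = 2 ∨ i.val = 3 := by
          have h5 : i.val < 4 := i.isLt; omega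
        rcases h4 with h | h | h | h
        exacts [Or.inl (Fin.ext h), Or.inr (Or.inl (Fin.ext h)),
          Or.inr (Or.inr (Or.inl (Fin.ext h))), Or.inr (Or.inr (Or.inr (Fin.ext h)))]
      have hj : j = ⟨0, by decide⟩ ∨ j = ⟨1, by decide⟩ ∨ j = ⟨2, by decide⟩ ∨ j = ⟨3, by decide⟩ := by
        have h4 : j.val = 0 ∨ j.val = 1 ∨ j.val = 2 ∨ j.val = 3 := by
          have h5 : j.val < 4 := j.isLt; omega
        rcases h4 with h | h | h | h
        exacts [Or.inl (Fin.ext h), Or.inr (Or.inl (Fin.ext h)),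
          Or.inr (Or.inr (Or.inl (Fin.ext h))), Or.inr (Or.inr (Or.inr (Fin.ext h)))]
      rcases hi with rfl | rfl | rfl | rfl <;> rcases hj with rfl | rfl | rfl | rfl <;>
        first
          | rfl
          | exact absurd hij hc12
          | exact absurd hij hc12.symm
          | exact absurd hij hc13
          | exact absurd hij (Ne.symm hc13)
          | exact absurd hij hc23
          | exact absurd hij (Ne.symm hc23)
          | exact absurd hij hc14
          | exact absurd hij (Ne.symm hc14)
          | exact absurd hij hc24
          | exact absurd hij (Ne.symm hc24)
          | exact absurd hij hc34
          | exact absurd hij (Ne.symm hc34))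
  case refine_2 =>
    have hf0 : (![i0, i1, i2, i3] : Fin G1.length → Fin G.length) ⟨0, by decide⟩ = i0 := rfl
    have hf1 : (![i0, i1, i2, i3] : Fin G1.length → Fin G.length) ⟨1, by decide⟩ = i1 := rfl
    have hf2 : (![i0, i1, i2, i3] : Fin G1.length → Fin G.length) ⟨2, by decide⟩ = i2 := rfl
    have hf3 : (![i0, i1, i2, i3] : Fin G1.length → Fin G.length) ⟨3, by decide⟩ = i3 := rfl
    intro i
    have hi : i = ⟨0, by decide⟩ ∨ i = ⟨1, by decide⟩ ∨ i = ⟨2, by decide⟩ ∨ i = ⟨3, by decide⟩ := by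
      have h4 : i.val = 0 ∨ i.val = 1 ∨ i.val = 2 ∨ i.val = 3 := by
        have h5 : i.val < 4 := i.isLt; omega
      rcases h4 with h | h | h | h
      exacts [Or.inl (Fin.ext h), Or.inr (Or.inl (Fin.ext h)),
        Or.inr (Or.inr (Or.inl (Fin.ext h))), Or.inr (Or.inr (Or.inr (Fin.ext h)))]
    rcases hi with rfl | rfl | rfl | rfl <;> intro w hw
    · have hw' : w = 1 ∨ w = 3 := by
        have h : G1.get ⟨0, by decide⟩ = ({1, 3} : Finset ℕ) := rfl
        rw [h] at hw
        simpa using hw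
      show _ ∈ G.get i0; rw [hg0]
      rcases hw' with rfl | rfl
      · show a1 ∈ ({a1, v} : Finset ℕ); simp
      · show v ∈ ({a1, v} : Finset ℕ); simp
    · have hw' : w = 1 ∨ w = 5 := by
        have h : G1.get ⟨1, by decide⟩ = ({1, 5} : Finset ℕ) := rfl
        rw [h] at hw
        simpa using hw
      show _ ∈ G.get i1; rw [hg1]
      rcases hw' with rfl | rfl
      · show a1 ∈ ({a1, cc} : Finset ℕ); simp
      · show cc + 0 ∈ ({a1, cc} : Finset ℕ); simp
    · have hw' : w = 2 ∨ w = 3 := by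
        have h : G1.get ⟨2, by decide⟩ = ({2, 3} : Finset ℕ) := rfl
        rw [h] at hw
        simpa using hw
      show _ ∈ G.get i2; rw [hg2]
      rcases hw' with rfl | rfl
      · show a2 ∈ ({a2, v} : Finset ℕ); simp
      · show v ∈ ({a2, v} : Finset ℕ); simp
    · have hw' : w = 2 ∨ w = 4 := by
        have h : G1.get ⟨3, by decide⟩ = ({2, 4} : Finset ℕ) := rfl
        rw [h] at hw
        simpa using hw
      show _ ∈ G.get i3; rw [hg3]
      rcases hw' with rfl | rfl
      · show a2 ∈ ({a2, b} : Finset ℕ); simp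
      · show b ∈ ({a2, b} : Finset ℕ); simp
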